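/- For rational Weil divisors D₁, …, D_r on Y = Spec A₀ where A₀ is a Dedekind domain, the ℕ^r-graded algebra B = ⊕_{(m₁,…,m_r)∈ℕ^r} H⁰(Y, O_Y(⌊Σ_i m_i D_i⌋)) is finitely generated as an algebra over A₀. -/

import Mathlib

open IsDedekindDomain

section Aux

open FractionalIdeal Multiplicative nonZeroDivisors


variable {R : Type*} [CommRing R] [IsDedekindDomain R] {K : Type*} [Field K]
  [Algebra R K] [IsFractionRing R K]

open scoped Classical in
theorem val_count {x : K} (hx : x ≠ 0) (v : HeightOneSpectrum R) :
    v.valuation K x = ((ofAdd (-(FractionalIdeal.count K v (spanSingleton R⁰ x))) : Multiplicative ℤ) : WithZero (Multiplicative ℤ)) := by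
  obtain ⟨⟨n, d⟩, hnd⟩ := IsLocalization.mk'_surjective R⁰ x
  dsimp only at hnd
  subst hnd
  have hd0 : (algebraMap R K) (d : R) ≠ 0 :=
    map_ne_zero_of_mem_nonZeroDivisors _ (IsFractionRing.injective R K) d.property
  have hn : n ≠ 0 := by
    rintro rfl
    simp [IsFractionRing.mk'_eq_div] at hx
  have hI : spanSingleton R⁰ (IsLocalization.mk' K n d) =
      spanSingleton R⁰ ((algebraMap R K) (d : R))⁻¹ * ↑(Ideal.span {n} : Ideal R) := by
    rw [coeIdeal_span_singleton, spanSingleton_mul_spanSingleton]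
    apply congr_arg
    rw [IsFractionRing.mk'_eq_div, div_eq_mul_inv, mul_comm]
  have h0 : spanSingleton R⁰ (IsLocalization.mk' K n d) ≠ 0 := by
    rwa [spanSingleton_ne_zero_iff]
  rw [FractionalIdeal.count_well_defined K v h0 hI]
  rw [HeightOneSpectrum.valuation_of_mk', HeightOneSpectrum.intValuation_apply,
    HeightOneSpectrum.intValuation_apply,
    v.intValuationDef_if_neg hn, v.intValuationDef_if_neg (nonZeroDivisors.coe_ne_zero d)]
  simp only [WithZero.exp]
  rw [← WithZero.coe_div, WithZero.coe_inj]
  rw [div_eq_mul_inv, ← ofAdd_neg, ← ofAdd_add]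
  congr 1
  ring

theorem le_one_of_count_nonneg {H : FractionalIdeal R⁰ K} (hH : H ≠ 0)
    (h : ∀ v : HeightOneSpectrum R, 0 ≤ FractionalIdeal.count K v H) : H ≤ 1 := by
  have hfin : (Function.mulSupport fun v : HeightOneSpectrum R =>
      (v.asIdeal : FractionalIdeal R⁰ K) ^ (FractionalIdeal.count K v H)).Finite := by
    apply Set.Finite.subset (Filter.eventually_cofinite.mp (FractionalIdeal.finite_factors H))
    intro v hv
    rw [Function.mem_mulSupport] at hv
    simp only [Set.mem_setOf_eq]
    intro h0
    exact hv (by rw [h0, zpow_zero])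
  have hfact := FractionalIdeal.finprod_heightOneSpectrum_factorization' (K := K) hH
  rw [← hfact, finprod_eq_prod _ hfin]
  have : ∀ v ∈ hfin.toFinset, (v.asIdeal : FractionalIdeal R⁰ K) ^ (FractionalIdeal.count K v H)
      = ((v.asIdeal ^ (FractionalIdeal.count K v H).toNat : Ideal R) : FractionalIdeal R⁰ K) := by
    intro v _
    rw [coeIdeal_pow, ← zpow_natCast, Int.toNat_of_nonneg (h v)]
  rw [Finset.prod_congr rfl this]
  refine Finset.prod_induction _ (fun I => I ≤ 1) (fun a b ha hb => ?_) le_rfl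
    (fun v _ => coeIdeal_le_one)
  calc a * b ≤ a * 1 := _root_.mul_le_mul_right hb a
  _ = a := mul_one a
  _ ≤ 1 := ha

theorem mem_iff_val {I : FractionalIdeal R⁰ K} (hI : I ≠ 0) (x : K) :
    x ∈ I ↔ ∀ v : HeightOneSpectrum R,
      v.valuation K x ≤ ((ofAdd (-(FractionalIdeal.count K v I)) : Multiplicative ℤ) : WithZero (Multiplicative ℤ)) := by
  by_cases hx : x = 0
  · subst hx
    refine iff_of_true (zero_mem (I : Submodule R K)) fun v => ?_
    rw [Valuation.map_zero]
    exact zero_le'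
  constructor
  · intro hmem v
    rw [val_count hx v, WithZero.coe_le_coe, Multiplicative.ofAdd_le, neg_le_neg_iff]
    exact FractionalIdeal.count_mono K v (spanSingleton_ne_zero_iff.mpr hx)
      (spanSingleton_le_iff_mem.mpr hmem)
  · intro hval
    have hxI : spanSingleton R⁰ x ≠ 0 := spanSingleton_ne_zero_iff.mpr hx
    have hH : spanSingleton R⁰ x * I⁻¹ ≠ 0 := mul_ne_zero hxI (inv_ne_zero hI)
    have hcount : ∀ v : HeightOneSpectrum R, 0 ≤ FractionalIdeal.count K v (spanSingleton R⁰ x * I⁻¹) := by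
      intro v
      rw [FractionalIdeal.count_mul K v hxI (inv_ne_zero hI), FractionalIdeal.count_inv]
      have := hval v
      rw [val_count hx v, WithZero.coe_le_coe, Multiplicative.ofAdd_le, neg_le_neg_iff] at this
      omega
    have hle := le_one_of_count_nonneg hH hcount
    have : spanSingleton R⁰ x ≤ I := by
      have h2 := _root_.mul_le_mul_right hle I
      have h3 : I * (spanSingleton R⁰ x * I⁻¹) = spanSingleton R⁰ x := by
        rw [mul_comm, mul_assoc, inv_mul_cancel₀ hI, mul_one]
      rwa [mul_one, h3] at h2
    exact spanSingleton_le_iff_mem.mp this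

variable (K) in
/-- The fractional ideal `∏ v^{-e v}`, whose elements are those with `valuation ≤ ofAdd (e v)`. -/
noncomputable def Jfrac (e : HeightOneSpectrum R →₀ ℤ) : FractionalIdeal R⁰ K :=
  (-e).prod (HeightOneSpectrum.asIdeal · ^ ·)

theorem Jfrac_ne_zero (e : HeightOneSpectrum R →₀ ℤ) : Jfrac K e ≠ 0 := by
  rw [Jfrac, Finsupp.prod]
  exact Finset.prod_ne_zero_iff.mpr fun v _ => zpow_ne_zero _ (coeIdeal_ne_zero.mpr v.ne_bot)

theorem count_Jfrac (v : HeightOneSpectrum R) (e : HeightOneSpectrum R →₀ ℤ) :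
    FractionalIdeal.count K v (Jfrac K e) = -(e v) := by
  rw [Jfrac, FractionalIdeal.count_finsuppProd, Finsupp.neg_apply]

theorem mem_Jfrac (e : HeightOneSpectrum R →₀ ℤ) (x : K) :
    x ∈ Jfrac K e ↔ ∀ v : HeightOneSpectrum R,
      v.valuation K x ≤ ((ofAdd (e v) : Multiplicative ℤ) : WithZero (Multiplicative ℤ)) := by
  rw [mem_iff_val (Jfrac_ne_zero e)]
  simp [count_Jfrac]

theorem mem_Jfrac' (e : HeightOneSpectrum R →₀ ℤ) (x : K) :
    x ∈ (Jfrac K e : Submodule R K) ↔ ∀ v : HeightOneSpectrum R,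
      v.valuation K x ≤ ((ofAdd (e v) : Multiplicative ℤ) : WithZero (Multiplicative ℤ)) := by
  rw [FractionalIdeal.mem_coe]
  exact mem_Jfrac e x

open scoped Classical in
theorem Jfrac_add (e f : HeightOneSpectrum R →₀ ℤ) :
    Jfrac K (e + f) = Jfrac K e * Jfrac K f := by
  rw [Jfrac, Jfrac, Jfrac, neg_add]
  exact Finsupp.prod_add_index (fun v _ => zpow_zero _)
    (fun v _ m n => zpow_add₀ (coeIdeal_ne_zero.mpr v.ne_bot) m n)

theorem Jfrac_fg (e : HeightOneSpectrum R →₀ ℤ) :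
    ((Jfrac K e : FractionalIdeal R⁰ K) : Submodule R K).FG :=
  FractionalIdeal.fg_of_isNoetherianRing le_rfl _

theorem Jfrac_mul_mem {e f g : HeightOneSpectrum R →₀ ℤ}
    (h : ∀ p, e p + f p ≤ g p) {x y : K}
    (hx : x ∈ (Jfrac K e : Submodule R K)) (hy : y ∈ (Jfrac K f : Submodule R K)) :
    x * y ∈ (Jfrac K g : Submodule R K) := by
  rw [mem_Jfrac'] at *
  intro v
  rw [Valuation.map_mul]
  calc v.valuation K x * v.valuation K y
      ≤ ((ofAdd (e v) : Multiplicative ℤ) : WithZero (Multiplicative ℤ)) * ((ofAdd (f v) : Multiplicative ℤ) : WithZero (Multiplicative ℤ)) :=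
        mul_le_mul' (hx v) (hy v)
    _ = ((ofAdd (e v + f v) : Multiplicative ℤ) : WithZero (Multiplicative ℤ)) := by
        rw [← WithZero.coe_mul, ← ofAdd_add]
    _ ≤ ((ofAdd (g v) : Multiplicative ℤ) : WithZero (Multiplicative ℤ)) := by
        rw [WithZero.coe_le_coe, Multiplicative.ofAdd_le]; exact h v

variable {r : ℕ}

variable (D : Fin r → (HeightOneSpectrum R →₀ ℚ))

/-- The divisor `⌊∑ i, m i • D i⌋`. -/
noncomputable def Ediv (m : Fin r →₀ ℕ) : HeightOneSpectrum R →₀ ℤ :=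
  Finsupp.mapRange Int.floor Int.floor_zero (∑ i : Fin r, (m i : ℚ) • D i)

theorem Ediv_apply (m : Fin r →₀ ℕ) (p : HeightOneSpectrum R) :
    Ediv D m p = ⌊∑ i : Fin r, (m i : ℚ) * D i p⌋ := by
  rw [Ediv, Finsupp.mapRange_apply]
  congr 1
  rw [Finsupp.finset_sum_apply]
  simp [Finsupp.smul_apply, smul_eq_mul]

theorem sum_apply_add (u v : Fin r →₀ ℕ) (p : HeightOneSpectrum R) :
    (∑ i : Fin r, (((u + v) i : ℚ)) * D i p)
      = (∑ i : Fin r, (u i : ℚ) * D i p) + (∑ i : Fin r, (v i : ℚ) * D i p) := by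
  rw [← Finset.sum_add_distrib]
  refine Finset.sum_congr rfl fun i _ => ?_
  rw [Finsupp.add_apply]
  push_cast
  ring

theorem Ediv_superadd (u v : Fin r →₀ ℕ) (p : HeightOneSpectrum R) :
    Ediv D u p + Ediv D v p ≤ Ediv D (u + v) p := by
  simp only [Ediv_apply]
  rw [sum_apply_add]
  refine Int.le_floor.mpr ?_
  push_cast
  exact add_le_add (Int.floor_le _) (Int.floor_le _)

/-- The graded algebra `B`. -/
noncomputable def Bgr : Subalgebra R (MvPolynomial (Fin r) K) where
  carrier := {q | ∀ m : Fin r →₀ ℕ, MvPolynomial.coeff m q ∈ (Jfrac K (Ediv D m) : Submodule R K)}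
  zero_mem' := fun m => by
    rw [MvPolynomial.coeff_zero]
    exact zero_mem (Jfrac K (Ediv D m) : Submodule R K)
  add_mem' := fun {q q'} hq hq' m => by
    rw [MvPolynomial.coeff_add]
    exact add_mem (hq m) (hq' m)
  one_mem' := fun m => by
    classical
    rw [← MvPolynomial.C_1, MvPolynomial.coeff_C]
    split_ifs with h
    · rw [mem_Jfrac']
      intro v
      rw [Valuation.map_one, ← h, Ediv_apply]
      simp
    · exact zero_mem (Jfrac K (Ediv D m) : Submodule R K)
  mul_mem' := fun {q q'} hq hq' m => by
    classical
    rw [MvPolynomial.coeff_mul]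
    refine sum_mem fun c hc => ?_
    rw [Finset.HasAntidiagonal.mem_antidiagonal] at hc
    exact Jfrac_mul_mem (fun p => hc ▸ Ediv_superadd D c.1 c.2 p) (hq c.1) (hq' c.2)
  algebraMap_mem' := fun a m => by
    classical
    rw [MvPolynomial.algebraMap_apply, MvPolynomial.coeff_C]
    split_ifs with h
    · rw [mem_Jfrac']
      intro v
      rw [← h, Ediv_apply]
      simpa using v.valuation_le_one a
    · exact zero_mem (Jfrac K (Ediv D m) : Submodule R K)

/-- A common denominator for all the values of the divisors `D i`. -/
noncomputable def dden : ℕ := ∏ i : Fin r, ∏ p ∈ (D i).support, (D i p).den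

omit [IsDedekindDomain R] in
theorem dden_pos : 0 < dden D :=
  Finset.prod_pos fun i _ => Finset.prod_pos fun p _ => (D i p).pos

omit [IsDedekindDomain R] in
theorem dden_int (i : Fin r) (p : HeightOneSpectrum R) :
    ∃ z : ℤ, (z : ℚ) = (dden D : ℚ) * D i p := by
  by_cases hp : p ∈ (D i).support
  · have h1 : (D i p).den ∣ ∏ q ∈ (D i).support, (D i q).den :=
      Finset.dvd_prod_of_mem (fun q => (D i q).den) hp
    have h2 : (∏ q ∈ (D i).support, (D i q).den) ∣ dden D :=
      Finset.dvd_prod_of_mem (fun j => ∏ q ∈ (D j).support, (D j q).den) (Finset.mem_univ i)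
    have hdvd : (D i p).den ∣ dden D := dvd_trans h1 h2
    obtain ⟨k, hk⟩ := hdvd
    refine ⟨(D i p).num * k, ?_⟩
    have hden : ((D i p).den : ℚ) ≠ 0 := Nat.cast_ne_zero.mpr (D i p).den_nz
    have hq : ((D i p).den : ℚ) * D i p = ((D i p).num : ℚ) := by
      rw [mul_comm]
      exact ((div_eq_iff hden).mp (Rat.num_div_den (D i p))).symm
    rw [hk]
    push_cast
    rw [mul_comm ((D i p).den : ℚ) (k : ℚ), mul_assoc, hq]
    ring
  · rw [Finsupp.notMem_support_iff.mp hp]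
    exact ⟨0, by simp⟩

omit [IsDedekindDomain R] in
theorem Ediv_single_sum (i : Fin r) (p : HeightOneSpectrum R) :
    (∑ j : Fin r, ((Finsupp.single i (dden D)) j : ℚ) * D j p) = (dden D : ℚ) * D i p := by
  classical
  rw [Finset.sum_eq_single i]
  · simp
  · intro b _ hb
    rw [Finsupp.single_apply, if_neg (Ne.symm hb)]
    simp
  · simp

theorem Ediv_decomp {m : Fin r →₀ ℕ} {i : Fin r} (h : dden D ≤ m i) :
    Ediv D m = Ediv D (m - Finsupp.single i (dden D)) + Ediv D (Finsupp.single i (dden D)) := by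
  classical
  have hm : (m - Finsupp.single i (dden D)) + Finsupp.single i (dden D) = m :=
    tsub_add_cancel_of_le (Finsupp.single_le_iff.mpr h)
  ext p
  obtain ⟨z, hz⟩ := dden_int D i p
  have hsum : (∑ j : Fin r, (m j : ℚ) * D j p)
      = (∑ j : Fin r, ((m - Finsupp.single i (dden D)) j : ℚ) * D j p) + (z : ℚ) := by
    conv_lhs => rw [← hm]
    rw [sum_apply_add, Ediv_single_sum, hz]
  rw [Finsupp.add_apply, Ediv_apply, Ediv_apply, Ediv_apply, hsum, Int.floor_add_intCast,
    Ediv_single_sum, ← hz, Int.floor_intCast]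

theorem mem_Bgr {q : MvPolynomial (Fin r) K} :
    q ∈ Bgr (K := K) D ↔ ∀ m : Fin r →₀ ℕ,
      MvPolynomial.coeff m q ∈ (Jfrac K (Ediv D m) : Submodule R K) :=
  Iff.rfl

theorem Bgr_fg : (Bgr (K := K) D).FG := by
  classical
  set d := dden D with hd
  have hd0 : 0 < d := dden_pos D
  have hT : ∀ m : Fin r →₀ ℕ, ∃ T : Finset K,
      Submodule.span R (T : Set K) = (Jfrac K (Ediv D m) : Submodule R K) :=
    fun m => Jfrac_fg (Ediv D m)
  choose T hTspan using hT
  set Sfin : Finset (Fin r →₀ ℕ) :=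
    (Finset.univ : Finset (Fin r → Fin (d + 1))).image
      (fun f => Finsupp.equivFunOnFinite.symm fun i => (f i : ℕ)) with hSfin
  have hmemS : ∀ m : Fin r →₀ ℕ, (∀ i, m i ≤ d) → m ∈ Sfin := by
    intro m hm
    refine Finset.mem_image.mpr ⟨fun i => ⟨m i, Nat.lt_succ_of_le (hm i)⟩, Finset.mem_univ _, ?_⟩
    exact Finsupp.equivFunOnFinite_symm_coe m
  set G : Finset (MvPolynomial (Fin r) K) :=
    Sfin.biUnion (fun s => (T s).image (fun t => MvPolynomial.monomial s t)) with hG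
  refine ⟨G, ?_⟩
  apply le_antisymm
  · rw [Algebra.adjoin_le_iff]
    intro x hx
    rw [Finset.mem_coe, hG, Finset.mem_biUnion] at hx
    obtain ⟨s, hs, hx⟩ := hx
    rw [Finset.mem_image] at hx
    obtain ⟨t, ht, rfl⟩ := hx
    rw [SetLike.mem_coe, mem_Bgr]
    intro m
    rw [MvPolynomial.coeff_monomial]
    split_ifs with hsm
    · subst hsm
      exact hTspan s ▸ Submodule.subset_span ht
    · exact Submodule.zero_mem _
  · have base : ∀ s : Fin r →₀ ℕ, s ∈ Sfin → ∀ x ∈ (Jfrac K (Ediv D s) : Submodule R K),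
        (MvPolynomial.monomial s x) ∈ Algebra.adjoin R (G : Set (MvPolynomial (Fin r) K)) := by
      intro s hs x hx
      rw [← hTspan s] at hx
      induction hx using Submodule.span_induction with
      | mem t ht =>
        exact Algebra.subset_adjoin
          (Finset.mem_coe.mpr (Finset.mem_biUnion.mpr ⟨s, hs, Finset.mem_image_of_mem _ ht⟩))
      | zero =>
        rw [_root_.map_zero]
        exact Subalgebra.zero_mem _
      | add x y hx hy ihx ihy =>
        rw [_root_.map_add]
        exact add_mem ihx ihy
      | smul a x hx ihx =>
        rw [← MvPolynomial.smul_monomial]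
        exact Subalgebra.smul_mem _ ihx a
    have key : ∀ n : ℕ, ∀ m : Fin r →₀ ℕ, (m.sum fun _ k => k) = n →
        ∀ x ∈ (Jfrac K (Ediv D m) : Submodule R K),
        (MvPolynomial.monomial m x) ∈ Algebra.adjoin R (G : Set (MvPolynomial (Fin r) K)) := by
      intro n
      induction n using Nat.strong_induction_on with
      | _ n ih =>
        intro m hdeg x hx
        by_cases hb : ∀ i, m i ≤ d
        · exact base m (hmemS m hb) x hx
        · push_neg at hb
          obtain ⟨i, hi⟩ := hb
          have hle : d ≤ m i := hi.le
          have hmev : (m - Finsupp.single i d) + Finsupp.single i d = m :=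
            tsub_add_cancel_of_le (Finsupp.single_le_iff.mpr hle)
          rw [Ediv_decomp D hle, Jfrac_add, FractionalIdeal.coe_mul] at hx
          have hdeg' : ((m - Finsupp.single i d).sum fun _ k => k) < n := by
            have hsum : ((m - Finsupp.single i d).sum fun _ k => k) + d = n := by
              rw [← hdeg]
              conv_rhs => rw [← hmev]
              rw [Finsupp.sum_add_index' (fun _ => rfl) (fun _ _ _ => rfl),
                Finsupp.sum_single_index rfl]
            omega
          refine Submodule.mul_induction_on hx ?_ ?_
          · intro y hy z hz
            have h1 : (MvPolynomial.monomial m (y * z)) =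
                MvPolynomial.monomial (m - Finsupp.single i d) y *
                  MvPolynomial.monomial (Finsupp.single i d) z := by
              rw [MvPolynomial.monomial_mul, hmev]
            rw [h1]
            refine mul_mem (ih _ hdeg' _ rfl y hy) (base _ (hmemS _ fun j => ?_) z hz)
            rw [Finsupp.single_apply]
            split_ifs
            · exact le_rfl
            · exact Nat.zero_le d
          · intro u w hu hw
            rw [_root_.map_add]
            exact add_mem hu hw
    intro q hq
    rw [mem_Bgr] at hq
    rw [MvPolynomial.as_sum q]
    exact sum_mem fun m _ => key _ m rfl _ (hq m)

end Aux

/-- For `ℚ`-Weil divisors `D₁, …, D_r` on `Y = Spec A₀` (`A₀` a Dedekind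
domain), the `ℕ^r`-graded algebra `B = ⊕_{m∈ℕ^r} H⁰(Y, O_Y(⌊Σᵢ mᵢ Dᵢ⌋))` (realized as the
subalgebra of `K₀[x₁,…,x_r]` whose coefficient of the monomial `x^m` lies in
`H⁰(Y, O_Y(⌊Σᵢ mᵢ Dᵢ⌋))`) is a finitely generated `A₀`-algebra. -/
theorem stmt5 (A₀ : Type*) [CommRing A₀] [IsDedekindDomain A₀] (hnf : ¬ IsField A₀)
    (K₀ : Type*) [Field K₀] [Algebra A₀ K₀] [IsFractionRing A₀ K₀]
    (r : ℕ) (D : Fin r → (HeightOneSpectrum A₀ →₀ ℚ)) :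
    ∃ B : Subalgebra A₀ (MvPolynomial (Fin r) K₀),
      (∀ q : MvPolynomial (Fin r) K₀, q ∈ B ↔
        ∀ m : Fin r →₀ ℕ, ∀ p : HeightOneSpectrum A₀,
          p.valuation K₀ (MvPolynomial.coeff m q) ≤
            ((Multiplicative.ofAdd ⌊∑ i : Fin r, (m i : ℚ) * D i p⌋ : Multiplicative ℤ) :
              WithZero (Multiplicative ℤ))) ∧
      B.FG := by
  refine ⟨Bgr (K := K₀) D, fun q => ?_, Bgr_fg D⟩
  rw [mem_Bgr]
  refine forall_congr' fun m => ?_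
  rw [mem_Jfrac']
  refine forall_congr' fun p => ?_
  rw [Ediv_apply]
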